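/- Let G be a graph, w a vertex of G, and G' = G − w. If Ω' is a potential maximal clique in G', then exactly one of the two sets Ω' and Ω' ∪ {w} is a potential maximal clique in G. -/

import Mathlib

open SimpleGraph

variable {V : Type*}

/-- `D` is a connected component of `G[W] - Ω` (the graph induced on the ground set `W`,
with `Ω` removed). -/
def IsCompIn (G : SimpleGraph V) (W Ω D : Set V) : Prop :=
  D.Nonempty ∧ D ⊆ W ∧ Disjoint D Ω ∧ (G.induce D).Connected ∧
    ∀ v ∈ D, ∀ x ∈ W, G.Adj v x → x ∉ Ω → x ∈ D

/-- The open neighborhood of `D` inside the ground set `W`. -/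
def nbhdIn (G : SimpleGraph V) (W D : Set V) : Set V :=
  {v ∈ W | v ∉ D ∧ ∃ d ∈ D, G.Adj v d}

/-- `Ω` is a potential maximal clique of the graph induced by `G` on the ground set `W`. -/
def IsPMCIn (G : SimpleGraph V) (W Ω : Set V) : Prop :=
  Ω ⊆ W ∧
  (∀ D : Set V, IsCompIn G W Ω D → nbhdIn G W D ≠ Ω) ∧
  (∀ u ∈ Ω, ∀ v ∈ Ω, u ≠ v → ¬ G.Adj u v →
    ∃ D : Set V, IsCompIn G W Ω D ∧ u ∈ nbhdIn G W D ∧ v ∈ nbhdIn G W D)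

namespace PMCaux

variable {G : SimpleGraph V}


variable {G : SimpleGraph V}

lemma reach_induce {D : Set V} {u v : V} (p : G.Walk u v) (hp : ∀ x ∈ p.support, x ∈ D)
    (hu : u ∈ D) (hv : v ∈ D) : (G.induce D).Reachable ⟨u, hu⟩ ⟨v, hv⟩ := by
  induction p with
  | nil => rfl
  | @cons a b c h p ih =>
      have hb : b ∈ D := hp b (by simp)
      refine Reachable.trans (Adj.reachable ?_) (ih (fun x hx => hp x (by simp [hx])) hb hv)
      exact h

lemma exists_walk_of_induce {D : Set V} {a b : ↥D} (p : (G.induce D).Walk a b) :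
    ∃ q : G.Walk a b, ∀ x ∈ q.support, x ∈ D := by
  induction p with
  | nil => exact ⟨Walk.nil, by simp⟩
  | @cons a b c h p ih =>
      obtain ⟨q, hq⟩ := ih
      refine ⟨Walk.cons h q, ?_⟩
      intro x hx
      rcases List.mem_cons.mp (show x ∈ (a : V) :: q.support from hx) with h1 | h2
      · subst h1; exact a.2
      · exact hq x h2

def comp (G : SimpleGraph V) (Ω : Set V) (a : V) : Set V :=
  {v | ∃ p : G.Walk a v, ∀ x ∈ p.support, x ∉ Ω}

lemma mem_comp_self {Ω : Set V} {a : V} (ha : a ∉ Ω) : a ∈ comp G Ω a :=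
  ⟨Walk.nil, by simpa using ha⟩

lemma not_mem_of_mem_comp {Ω : Set V} {a v : V} (hv : v ∈ comp G Ω a) : v ∉ Ω := by
  obtain ⟨p, hp⟩ := hv
  exact hp v p.end_mem_support

lemma comp_closed {Ω : Set V} {a v x : V} (hv : v ∈ comp G Ω a) (h : G.Adj v x)
    (hx : x ∉ Ω) : x ∈ comp G Ω a := by
  obtain ⟨p, hp⟩ := hv
  refine ⟨p.concat h, ?_⟩
  intro y hy
  rw [Walk.support_concat] at hy
  rcases List.mem_append.mp hy with h1 | h2
  · exact hp y h1
  · simp at h2; subst h2; exact hx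

lemma mem_comp_of_support {Ω : Set V} {a v x : V} {p : G.Walk a v}
    (hp : ∀ y ∈ p.support, y ∉ Ω) (hx : x ∈ p.support) : x ∈ comp G Ω a := by
  classical
  exact ⟨p.takeUntil x hx, fun y hy => hp y (p.support_takeUntil_subset hx hy)⟩

lemma comp_isCompIn {Ω : Set V} {a : V} (ha : a ∉ Ω) :
    IsCompIn G Set.univ Ω (comp G Ω a) := by
  refine ⟨⟨a, mem_comp_self ha⟩, Set.subset_univ _, ?_, ?_, ?_⟩
  · exact Set.disjoint_left.mpr fun v hv => not_mem_of_mem_comp hv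
  · rw [connected_iff]
    refine ⟨?_, ⟨⟨a, mem_comp_self ha⟩⟩⟩
    rintro ⟨u, hu⟩ ⟨v, hv⟩
    obtain ⟨pu, hpu⟩ := hu
    obtain ⟨pv, hpv⟩ := hv
    have h1 := reach_induce (D := comp G Ω a) pu
      (fun x hx => mem_comp_of_support hpu hx) (mem_comp_self ha) ⟨pu, hpu⟩
    have h2 := reach_induce (D := comp G Ω a) pv
      (fun x hx => mem_comp_of_support hpv hx) (mem_comp_self ha) ⟨pv, hpv⟩
    exact h1.symm.trans h2
  · intro v hv x _ hadj hx
    exact comp_closed hv hadj hx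

lemma nbhd_comp_subset {Ω : Set V} {a : V} :
    nbhdIn G Set.univ (comp G Ω a) ⊆ Ω := by
  rintro v ⟨-, hvD, d, hd, hadj⟩
  by_contra hv
  exact hvD (comp_closed hd hadj.symm hv)

lemma subset_comp {Ω D : Set V} {d₀ : V} (hconn : (G.induce D).Connected)
    (hdisj : ∀ x ∈ D, x ∉ Ω) (hd₀ : d₀ ∈ D) : D ⊆ comp G Ω d₀ := by
  intro d hd
  obtain ⟨p⟩ := hconn.preconnected ⟨d₀, hd₀⟩ ⟨d, hd⟩
  obtain ⟨q, hq⟩ := exists_walk_of_induce p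
  exact ⟨q, fun x hx => hdisj x (hq x hx)⟩

lemma walk_end_mem_of_closed {Ω D : Set V} {u v : V} (p : G.Walk u v)
    (hcl : ∀ v ∈ D, ∀ x, G.Adj v x → x ∉ Ω → x ∈ D)
    (hp : ∀ y ∈ p.support, y ∉ Ω) (hu : u ∈ D) : v ∈ D := by
  induction p with
  | nil => exact hu
  | @cons a b c h p ih =>
      have hb : b ∉ Ω := hp b (by simp)
      exact ih (fun y hy => hp y (by simp [hy])) (hcl a hu b h hb)

lemma comp_subset_of_closed {Ω D : Set V} {a : V} (ha : a ∈ D)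
    (hcl : ∀ v ∈ D, ∀ x, G.Adj v x → x ∉ Ω → x ∈ D) : comp G Ω a ⊆ D := by
  rintro v ⟨p, hp⟩
  exact walk_end_mem_of_closed p hcl hp ha


lemma nbhd_mono {w : V} {D : Set V} :
    nbhdIn G (({w} : Set V)ᶜ) D ⊆ nbhdIn G Set.univ D := by
  rintro v ⟨-, hvD, d, hd, hadj⟩
  exact ⟨Set.mem_univ v, hvD, d, hd, hadj⟩

lemma compIn_lift {w : V} {Ω' D : Set V} (hD : IsCompIn G (({w} : Set V)ᶜ) Ω' D) :
    IsCompIn G Set.univ (Ω' ∪ {w}) D := by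
  obtain ⟨hne, hsub, hdisj, hconn, hcl⟩ := hD
  refine ⟨hne, Set.subset_univ _, ?_, hconn, ?_⟩
  · rw [Set.disjoint_union_right]
    exact ⟨hdisj, Set.disjoint_left.mpr fun x hx hx' => (hsub hx) hx'⟩
  · intro v hv x _ hadj hx
    have hxw : x ≠ w := fun h0 => hx (h0 ▸ Or.inr rfl)
    exact hcl v hv x hxw hadj (fun h0 => hx (Or.inl h0))

lemma compIn_restrict {w : V} {Ω' D : Set V} (hD : IsCompIn G Set.univ (Ω' ∪ {w}) D) :
    IsCompIn G (({w} : Set V)ᶜ) Ω' D := by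
  obtain ⟨hne, _, hdisj, hconn, hcl⟩ := hD
  rw [Set.disjoint_union_right] at hdisj
  refine ⟨hne, ?_, hdisj.1, hconn, ?_⟩
  · intro x hx
    exact fun h0 => Set.disjoint_left.mp hdisj.2 hx h0
  · intro v hv x hxW hadj hx
    exact hcl v hv x (Set.mem_univ x) hadj (fun h0 => h0.elim (fun h1 => hx h1) (fun h1 => hxW h1))

end PMCaux

open PMCaux in
theorem statement_6 [Fintype V] (G : SimpleGraph V) (w : V) (Ω' : Set V)
    (h : IsPMCIn G ({w} : Set V)ᶜ Ω') :
    Xor' (IsPMCIn G Set.univ Ω') (IsPMCIn G Set.univ (Ω' ∪ {w})) := by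
  classical
  have hw' : w ∉ Ω' := fun hw => h.1 hw rfl
  set Dw := PMCaux.comp G Ω' w with hDwdef
  have hDwcomp : IsCompIn G Set.univ Ω' Dw := comp_isCompIn hw'
  by_cases hcase : nbhdIn G Set.univ Dw = Ω'
  · refine Or.inr ⟨⟨Set.subset_univ _, ?_, ?_⟩, ?_⟩
    · -- PMC1 for Ω' ∪ {w}
      intro D hD heq
      apply h.2.1 D (compIn_restrict hD)
      have hDw' : D ⊆ ({w} : Set V)ᶜ := (compIn_restrict hD).2.1
      ext v
      constructor
      · intro hv
        have hvu : v ∈ nbhdIn G Set.univ D := nbhd_mono hv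
        rw [heq] at hvu
        rcases hvu with hv1 | hv1
        · exact hv1
        · exact absurd hv1 hv.1
      · intro hv
        have hv2 : v ∈ Ω' ∪ {w} := Or.inl hv
        rw [← heq] at hv2
        obtain ⟨-, hvD, d, hd, hadj⟩ := hv2
        exact ⟨fun h0 => hw' (h0 ▸ hv), hvD, d, hd, hadj⟩
    · -- PMC2 for Ω' ∪ {w}
      have key : ∀ u ∈ Ω', ¬ G.Adj u w → ∃ D, IsCompIn G Set.univ (Ω' ∪ {w}) D ∧
          u ∈ nbhdIn G Set.univ D ∧ w ∈ nbhdIn G Set.univ D := by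
        intro u hu hadjuw
        have hunb : u ∈ nbhdIn G Set.univ Dw := by rw [hcase]; exact hu
        obtain ⟨-, huD, d, hd, hadjud⟩ := hunb
        obtain ⟨p, hp⟩ := hd
        have hdw : d ≠ w := fun h0 => hadjuw (h0 ▸ hadjud)
        have hwmem : w ∈ p.reverse.support := by
          rw [Walk.support_reverse]
          exact List.mem_reverse.mpr p.start_mem_support
        set q := p.reverse.takeUntil w hwmem with hqdef
        have hqsup : ∀ x ∈ q.support, x ∉ Ω' := by
          intro x hx
          have hx2 := Walk.support_takeUntil_subset _ hwmem hx
          rw [Walk.support_reverse, List.mem_reverse] at hx2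
          exact hp x hx2
        have hcount : q.support.count w = 1 := Walk.count_support_takeUntil_eq_one _ hwmem
        obtain ⟨y, hadjwy, s, hs⟩ := Walk.exists_eq_cons_of_ne (Ne.symm hdw) q.reverse
        have hwns : w ∉ s.support := by
          have hc1 : q.reverse.support.count w = 1 := by
            rw [Walk.support_reverse, List.count_reverse]; exact hcount
          rw [hs, Walk.support_cons, List.count_cons_self] at hc1
          have : s.support.count w = 0 := by omega
          exact List.count_eq_zero.mp this
        have hssup : ∀ x ∈ s.support, x ∉ Ω' := by
          intro x hx
          apply hqsup x
          have : x ∈ q.reverse.support := by rw [hs, Walk.support_cons]; exact List.mem_cons_of_mem _ hx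
          rwa [Walk.support_reverse, List.mem_reverse] at this
        have hdΩ : d ∉ Ω' ∪ {w} := by
          rintro (h1 | h1)
          · exact hp d p.end_mem_support h1
          · exact hdw h1
        refine ⟨PMCaux.comp G (Ω' ∪ {w}) d, comp_isCompIn hdΩ, ?_, ?_⟩
        · exact ⟨Set.mem_univ u, fun hc => not_mem_of_mem_comp hc (Or.inl hu),
            d, mem_comp_self hdΩ, hadjud⟩
        · have hy : y ∈ PMCaux.comp G (Ω' ∪ {w}) d := by
            refine ⟨s.reverse, ?_⟩
            intro x hx
            rw [Walk.support_reverse, List.mem_reverse] at hx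
            rintro (h1 | h1)
            · exact hssup x hx h1
            · exact hwns (h1 ▸ hx)
          exact ⟨Set.mem_univ w, fun hc => not_mem_of_mem_comp hc (Or.inr rfl),
            y, hy, hadjwy⟩
      intro u hu v hv hne hnadj
      rcases hu with hu | hu
      · rcases hv with hv | hv
        · obtain ⟨D', hD', hu', hv'⟩ := h.2.2 u hu v hv hne hnadj
          exact ⟨D', compIn_lift hD', nbhd_mono hu', nbhd_mono hv'⟩
        · rw [Set.mem_singleton_iff] at hv; subst hv
          exact key u hu hnadj
      · rw [Set.mem_singleton_iff] at hu; subst hu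
        rcases hv with hv | hv
        · obtain ⟨D, h1, h2, h3⟩ := key v hv (fun ha => hnadj ha.symm)
          exact ⟨D, h1, h3, h2⟩
        · rw [Set.mem_singleton_iff] at hv; exact absurd hv.symm hne
    · -- Ω' is not PMC
      intro hP
      exact hP.2.1 Dw hDwcomp hcase
  · refine Or.inl ⟨⟨Set.subset_univ _, ?_, ?_⟩, ?_⟩
    · -- PMC1 for Ω'
      intro D hD heq
      obtain ⟨hne, -, hdisj, hconn, hcl⟩ := hD
      by_cases hwD : w ∈ D
      · have hDeq : D = Dw := by
          apply Set.Subset.antisymm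
          · exact subset_comp hconn (fun x hx => Set.disjoint_left.mp hdisj hx) hwD
          · exact comp_subset_of_closed hwD (fun v hv x hadj hx => hcl v hv x (Set.mem_univ x) hadj hx)
        exact hcase (hDeq ▸ heq)
      · have hwnb : w ∉ nbhdIn G Set.univ D := by
          rintro ⟨-, hwD2, d, hd, hadj⟩
          exact hwD (hcl d hd w (Set.mem_univ w) hadj.symm hw')
        have hrestrict : IsCompIn G (({w} : Set V)ᶜ) Ω' D := by
          refine ⟨hne, ?_, hdisj, hconn, ?_⟩
          · intro x hx h0
            exact hwD (h0 ▸ hx)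
          · intro v hv x _ hadj hx
            exact hcl v hv x (Set.mem_univ x) hadj hx
        apply h.2.1 D hrestrict
        ext v
        constructor
        · intro hv
          rw [← heq]
          exact nbhd_mono hv
        · intro hv
          have hv2 : v ∈ nbhdIn G Set.univ D := by rw [heq]; exact hv
          obtain ⟨-, hvD, d, hd, hadj⟩ := hv2
          exact ⟨fun h0 => hw' (h0 ▸ hv), hvD, d, hd, hadj⟩
    · -- PMC2 for Ω'
      intro u hu v hv hne hnadj
      obtain ⟨D', hD', hu', hv'⟩ := h.2.2 u hu v hv hne hnadj
      obtain ⟨d₀, hd₀⟩ := hD'.1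
      have hd₀Ω : d₀ ∉ Ω' := Set.disjoint_left.mp hD'.2.2.1 hd₀
      have hsub : D' ⊆ PMCaux.comp G Ω' d₀ :=
        subset_comp hD'.2.2.2.1 (fun x hx => Set.disjoint_left.mp hD'.2.2.1 hx) hd₀
      obtain ⟨-, -, du, hdu, hadju⟩ := hu'
      obtain ⟨-, -, dv, hdv, hadjv⟩ := hv'
      exact ⟨PMCaux.comp G Ω' d₀, comp_isCompIn hd₀Ω,
        ⟨Set.mem_univ u, fun hc => not_mem_of_mem_comp hc hu, du, hsub hdu, hadju⟩,
        ⟨Set.mem_univ v, fun hc => not_mem_of_mem_comp hc hv, dv, hsub hdv, hadjv⟩⟩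
    · -- Ω' ∪ {w} is not PMC
      intro hQ
      obtain ⟨u, huΩ, hun⟩ : ∃ u ∈ Ω', u ∉ nbhdIn G Set.univ Dw := by
        by_contra hc
        push_neg at hc
        exact hcase (Set.Subset.antisymm nbhd_comp_subset hc)
      have hunw : u ≠ w := fun h0 => hw' (h0 ▸ huΩ)
      have hnadj : ¬ G.Adj u w := fun hadj =>
        hun ⟨Set.mem_univ u, fun hc => not_mem_of_mem_comp hc huΩ, w, mem_comp_self hw', hadj⟩
      obtain ⟨D, hD, huD, hwD⟩ := hQ.2.2 u (Or.inl huΩ) w (Or.inr rfl) hunw hnadj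
      obtain ⟨-, hwnD, y, hy, hadjwy⟩ := hwD
      have hdisj : ∀ x ∈ D, x ∉ Ω' ∪ {w} := fun x hx => Set.disjoint_left.mp hD.2.2.1 hx
      have hDsub : D ⊆ PMCaux.comp G (Ω' ∪ {w}) y := subset_comp hD.2.2.2.1 hdisj hy
      have hDsubDw : D ⊆ Dw := by
        intro d hd
        obtain ⟨q, hq⟩ := hDsub hd
        refine ⟨Walk.cons hadjwy q, ?_⟩
        intro x hx
        rw [Walk.support_cons] at hx
        rcases List.mem_cons.mp hx with rfl | hx2
        · exact hw'
        · exact fun hxΩ => hq x hx2 (Or.inl hxΩ)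
      obtain ⟨-, huDn, d, hd, hadjud⟩ := huD
      exact hun ⟨Set.mem_univ u, fun hc => not_mem_of_mem_comp hc huΩ, d, hDsubDw hd, hadjud⟩
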